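/- Let E be an alternating 3-form satisfying the structure equation, and suppose for w₁, w₂ the contractions E(w₁,·,·), E(w₂,·,·) are of type (1,1). With E^w = (5E(w,·,·) - 3E(w,i·,i·))/8, one has for all λ: -E^{w₂}(w₁,λ) + E^{w₁}(w₂,λ) = (1/8)(-7E(w₂,w₁,λ) - 3E(iw₂,iw₁,λ)). -/
import Mathlib

/-- Suppose the contractions `E(w₁,·,·)` and `E(w₂,·,·)` are of type
(1,1).  With `E^w = (5E(w,·,·) - 3E(w,i·,i·))/8`, for all `λ`:
`-E^{w₂}(w₁,λ) + E^{w₁}(w₂,λ) = (1/8)(-7E(w₂,w₁,λ) - 3E(iw₂,iw₁,λ))`. -/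
theorem statement7 {V : Type*} [AddCommGroup V] [Module ℝ V]
    (J : V →ₗ[ℝ] V) (hJ : ∀ v, J (J v) = -v)
    (E : V →ₗ[ℝ] V →ₗ[ℝ] V →ₗ[ℝ] ℝ)
    (hswap12 : ∀ x y z, E x y z = -E y x z)
    (hswap23 : ∀ x y z, E x y z = -E x z y)
    (hstr : ∀ x y z, E x y z = E (J x) (J y) z + E x (J y) (J z) + E (J x) y (J z))
    (Ew : V → V → V → ℝ)
    (hEw : ∀ w x y, Ew w x y = (5 * E w x y - 3 * E w (J x) (J y)) / 8)
    (w1 w2 : V)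
    (hw1 : ∀ x y : V, E w1 (J x) (J y) = E w1 x y)
    (hw2 : ∀ x y : V, E w2 (J x) (J y) = E w2 x y)
    (lam : V) :
    -(Ew w2 w1 lam) + Ew w1 w2 lam
      = (1/8) * (-7 * E w2 w1 lam - 3 * E (J w2) (J w1) lam) := by
  have hA : E w2 (J w1) (J lam) = E w2 w1 lam := hw2 _ _
  have hB : E w1 (J w2) (J lam) = E w1 w2 lam := hw1 _ _
  have hC : E (J w2) w1 (J lam) = -E w1 (J w2) (J lam) := hswap12 _ _ _
  have hS : E w2 w1 lam
      = E (J w2) (J w1) lam + E w2 (J w1) (J lam) + E (J w2) w1 (J lam) := hstr _ _ _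
  have hsw : E w1 w2 lam = -E w2 w1 lam := hswap12 _ _ _
  have h1 := hEw w2 w1 lam
  have h2 := hEw w1 w2 lam
  rw [hA] at h1
  rw [hB] at h2
  linarith
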